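/- Let E be an n-dimensional nilpotent evolution algebra with maximal nilindex and structure matrix A with I_A = {(i,j): i+1 < j < n, a_{ij} ≠ 0} nonempty. Then for every automorphism φ of E, the scalar α = φ_{11} satisfies α^{2^{j−1} − 2^i} = 1 for every (i,j) ∈ I_A; hence α^η = 1 where η = gcd_{(i,j)∈I_A}(2^{j−1} − 2^i). -/

import Mathlib

/-- for an `n`-dimensional nilpotent evolution algebra of maximal nilindex
with `I_A = {(i,j) : i+1 < j < n, a_{ij} ≠ 0}` nonempty, every automorphism `φ` has
`α = φ_{11}` satisfying `α^{2^{j−1} − 2^i} = 1` for all `(i,j) ∈ I_A`; hence `α^η = 1`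
where `η = gcd_{(i,j)∈I_A}(2^{j−1} − 2^i)`. -/
theorem stmt18 {K E : Type*} [Field K] [CharZero K] [DecidableEq K]
    [NonUnitalNonAssocRing E]
    [Module K E] [SMulCommClass K E E] [IsScalarTower K E E]
    (n : ℕ) (hn : 2 ≤ n) (a : Fin n → Fin n → K) (e : Module.Basis (Fin n) K E)
    (hzero : ∀ i j : Fin n, i ≠ j → e i * e j = 0)
    (hsq : ∀ i : Fin n, e i * e i = ∑ j ∈ Finset.univ.filter (fun j => i < j), a i j • e j)
    (hne : ∀ i : Fin n, ∀ hi : (i : ℕ) + 1 < n, a i ⟨(i : ℕ) + 1, hi⟩ ≠ 0)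
    (IA : Finset (Fin n × Fin n))
    (hIA : IA = Finset.univ.filter
      (fun p : Fin n × Fin n => ((p.1 : ℕ) + 1) + 1 < (p.2 : ℕ) + 1 ∧ (p.2 : ℕ) + 1 < n
        ∧ a p.1 p.2 ≠ 0))
    (hne' : IA.Nonempty)
    (φ : E →ₗ[K] E) (hbij : Function.Bijective φ)
    (hmul : ∀ x y : E, φ (x * y) = φ x * φ y)
    (α : K) (hα : α = e.repr (φ (e ⟨0, by omega⟩)) ⟨0, by omega⟩) :
    (∀ p : Fin n × Fin n, p ∈ IA → α ^ (2 ^ (p.2 : ℕ) - 2 ^ ((p.1 : ℕ) + 1)) = 1) ∧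
    α ^ (IA.gcd (fun p : Fin n × Fin n => 2 ^ (p.2 : ℕ) - 2 ^ ((p.1 : ℕ) + 1))) = 1 := by
  set M : Fin n → Fin n → K := fun i j => e.repr (φ (e i)) j with hMdef
  have hM : ∀ i j, M i j = e.repr (φ (e i)) j := fun _ _ => rfl
  -- basic rewriting lemmas
  have hsq' : ∀ i : Fin n, e i * e i = ∑ j, (if i < j then a i j else 0) • e j := by
    intro i
    rw [hsq i, Finset.sum_filter]
    exact Finset.sum_congr rfl fun j _ => by split <;> simp
  have hrepr : ∀ (c : Fin n → K) (j : Fin n), e.repr (∑ k, c k • e k) j = c j := by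
    intro c j; rw [e.repr_sum_self]
  have hsqrepr : ∀ i j : Fin n, e.repr (e i * e i) j = if i < j then a i j else 0 := by
    intro i j; rw [hsq' i, hrepr]
  have hreprsum : ∀ (c : Fin n → K) (v : Fin n → E) (m : Fin n),
      e.repr (∑ j, c j • v j) m = ∑ j, c j * e.repr (v j) m := by
    intro c v m
    rw [map_sum, Finset.sum_apply']
    refine Finset.sum_congr rfl fun j _ => ?_
    rw [map_smul, Finsupp.smul_apply, smul_eq_mul]
  have hφe : ∀ i, φ (e i) = ∑ k, M i k • e k := fun i => (e.sum_repr (φ (e i))).symm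
  have hprod : ∀ c d : Fin n → K,
      (∑ k, c k • e k) * (∑ l, d l • e l) = ∑ k, (c k * d k) • (e k * e k) := by
    intro c d
    rw [Finset.sum_mul]
    refine Finset.sum_congr rfl fun k _ => ?_
    rw [Finset.mul_sum, Finset.sum_eq_single k]
    · rw [smul_mul_assoc, mul_smul_comm, smul_smul]
    · intro l _ hlk
      rw [smul_mul_assoc, mul_smul_comm, hzero k l (Ne.symm hlk), smul_zero, smul_zero]
    · intro h; exact absurd (Finset.mem_univ _) h
  -- linear independence of the squares, in coefficient form
  have L1 : ∀ c : Fin n → K, (∑ k, c k • (e k * e k)) = 0 →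
      ∀ k : Fin n, (k : ℕ) + 1 < n → c k = 0 := by
    intro c hc
    have hco : ∀ m : Fin n, (∑ k, c k * (if k < m then a k m else 0)) = 0 := by
      intro m
      have h := congrArg (fun x => e.repr x m) hc
      simp only [map_zero, Finsupp.coe_zero, Pi.zero_apply] at h
      rw [hreprsum] at h
      simp only [hsqrepr] at h
      exact h
    have key : ∀ kv : ℕ, ∀ hk : kv + 1 < n, c ⟨kv, by omega⟩ = 0 := by
      intro kv
      induction kv using Nat.strong_induction_on with
      | _ kv ih =>
        intro hk
        have h2 := hco ⟨kv + 1, hk⟩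
        rw [Finset.sum_eq_single (⟨kv, by omega⟩ : Fin n)] at h2
        · rw [if_pos (by simp [Fin.lt_def])] at h2
          exact (mul_eq_zero.mp h2).resolve_right (hne ⟨kv, by omega⟩ hk)
        · intro l _ hl
          by_cases hlt : l < (⟨kv + 1, hk⟩ : Fin n)
          · have hlv : (l : ℕ) < kv + 1 := hlt
            have hlkv : (l : ℕ) < kv := by
              rcases Nat.lt_succ_iff_lt_or_eq.mp hlv with h | h
              · exact h
              · exact absurd (Fin.ext h) hl
            have hz := ih l hlkv (by omega)
            simp only [Fin.eta] at hz
            rw [hz, zero_mul]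
          · rw [if_neg hlt, mul_zero]
        · intro h; exact absurd (Finset.mem_univ _) h
    intro k hk
    have := key k hk
    simpa using this
  -- column uniqueness
  have hcol : ∀ k : Fin n, (k : ℕ) + 1 < n → ∀ i j : Fin n, i ≠ j → M i k = 0 ∨ M j k = 0 := by
    intro k hk i j hij
    have h0 : φ (e i) * φ (e j) = 0 := by rw [← hmul, hzero i j hij, map_zero]
    rw [hφe i, hφe j, hprod] at h0
    exact mul_eq_zero.mp (L1 _ h0 k hk)
  have hNsq : e (⟨n - 1, by omega⟩ : Fin n) * e ⟨n - 1, by omega⟩ = 0 := by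
    rw [hsq]
    apply Finset.sum_eq_zero
    intro j hj
    rw [Finset.mem_filter] at hj
    have : (n : ℕ) - 1 < (j : ℕ) := hj.2
    exact absurd j.isLt (by omega)
  have hlast : ∀ m : Fin n, (m : ℕ) + 1 < n → M ⟨n - 1, by omega⟩ m = 0 := by
    intro m hm
    have h0 : φ (e (⟨n - 1, by omega⟩ : Fin n)) * φ (e ⟨n - 1, by omega⟩) = 0 := by
      rw [← hmul, hNsq, map_zero]
    rw [hφe, hprod] at h0
    exact mul_self_eq_zero.mp (L1 _ h0 m hm)
  -- image of any x, coefficientwise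
  have himg : ∀ (x : E) (m : Fin n), e.repr (φ x) m = ∑ j, e.repr x j * M j m := by
    intro x m
    conv_lhs => rw [← e.sum_repr x]
    rw [map_sum]
    simp_rw [map_smul]
    rw [hreprsum]
  -- row uniqueness
  have hrow : ∀ i k k' : Fin n, (k : ℕ) + 1 < n → (k' : ℕ) + 1 < n → k ≠ k' →
      M i k ≠ 0 → M i k' = 0 := by
    intro i k k' hk hk' hkk' hMik
    by_contra hMik'
    obtain ⟨x, hx⟩ := hbij.2 (e k)
    have h1 : (∑ j, e.repr x j * M j k) = 1 := by
      rw [← himg, hx, e.repr_self]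
      simp
    have h2 : (∑ j, e.repr x j * M j k') = 0 := by
      rw [← himg, hx, e.repr_self]
      simp [Finsupp.single_apply, hkk']
    rw [Finset.sum_eq_single i] at h1 h2
    · rcases mul_eq_zero.mp h2 with h | h
      · rw [h, zero_mul] at h1; exact one_ne_zero h1.symm
      · exact hMik' h
    · intro j _ hji
      rcases hcol k' hk' i j (Ne.symm hji) with h | h
      · exact absurd h hMik'
      · rw [h, mul_zero]
    · intro h; exact absurd (Finset.mem_univ _) h
    · intro j _ hji
      rcases hcol k hk i j (Ne.symm hji) with h | h
      · exact absurd h hMik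
      · rw [h, mul_zero]
    · intro h; exact absurd (Finset.mem_univ _) h
  -- row existence
  have hrowex : ∀ i : Fin n, (i : ℕ) + 1 < n → ∃ k : Fin n, (k : ℕ) + 1 < n ∧ M i k ≠ 0 := by
    intro i hi
    by_contra h
    push_neg at h
    have hsq0 : φ (e i) * φ (e i) = 0 := by
      rw [hφe i, hprod]
      apply Finset.sum_eq_zero
      intro k _
      by_cases hk : (k : ℕ) + 1 < n
      · rw [h k hk, zero_mul, zero_smul]
      · have hkN : k = ⟨n - 1, by omega⟩ := by
          apply Fin.ext
          show (k : ℕ) = n - 1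
          omega
        rw [hkN, hNsq, smul_zero]
    have h2 : e i * e i = 0 := hbij.1 (by rw [hmul, hsq0, map_zero])
    have h3 := congrArg (fun x => e.repr x ⟨(i : ℕ) + 1, hi⟩) h2
    simp only [map_zero, Finsupp.coe_zero, Pi.zero_apply] at h3
    rw [hsqrepr] at h3
    rw [if_pos (by simp [Fin.lt_def])] at h3
    exact hne i hi h3
  -- master equation
  have ME : ∀ i m : Fin n,
      (∑ j, (if i < j then a i j else 0) * M j m)
        = ∑ l, (M i l * M i l) * (if l < m then a l m else 0) := by
    intro i m
    have h1 : φ (e i * e i) = φ (e i) * φ (e i) := hmul _ _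
    rw [hφe i, hprod] at h1
    nth_rewrite 1 [hsq' i] at h1
    rw [map_sum] at h1
    simp_rw [map_smul] at h1
    have h := congrArg (fun x => e.repr x m) h1
    rw [hreprsum, hreprsum] at h
    simp only [hsqrepr] at h
    calc (∑ j, (if i < j then a i j else 0) * M j m)
        = ∑ j, (if i < j then a i j else 0) * e.repr (φ (e j)) m :=
          Finset.sum_congr rfl fun j _ => by rw [hM]
      _ = _ := h
  -- the diagonal entries are nonzero (downward strong induction)
  have hdiag : ∀ t : ℕ, ∀ i : Fin n, (i : ℕ) + 1 < n → n - 2 - (i : ℕ) ≤ t → M i i ≠ 0 := by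
    intro t
    induction t using Nat.strong_induction_on with
    | _ t ih =>
      intro i hi hti
      obtain ⟨k, hk, hMik⟩ := hrowex i hi
      rcases lt_trichotomy (k : ℕ) (i : ℕ) with hki | hki | hki
      · exfalso
        set m : Fin n := ⟨(k : ℕ) + 1, by omega⟩ with hmdef
        have hmS : (m : ℕ) + 1 < n := by
          show (k : ℕ) + 1 + 1 < n
          omega
        have hme := ME i m
        have hLHS : (∑ j, (if i < j then a i j else 0) * M j m) = 0 := by
          apply Finset.sum_eq_zero
          intro j _
          by_cases hij : i < j
          · rw [if_pos hij]
            have hji : (i : ℕ) < (j : ℕ) := hij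
            by_cases hjS : (j : ℕ) + 1 < n
            · have hMjj : M j j ≠ 0 := by
                refine ih (n - 2 - (j : ℕ)) (by omega) j hjS (le_refl _)
              rw [hrow j j m hjS hmS (by
                intro hjm
                have : (j : ℕ) = (k : ℕ) + 1 := by rw [hjm]
                omega) hMjj, mul_zero]
            · have hjN : j = ⟨n - 1, by omega⟩ := by
                apply Fin.ext; show (j : ℕ) = n - 1; omega
              rw [hjN, hlast m hmS, mul_zero]
          · rw [if_neg hij, zero_mul]
        have hRHS : (∑ l, (M i l * M i l) * (if l < m then a l m else 0))
            = (M i k * M i k) * a k m := by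
          rw [Finset.sum_eq_single k]
          · rw [if_pos (by show (k : ℕ) < (k : ℕ) + 1; omega)]
          · intro l _ hlk
            by_cases hlm : l < m
            · have hlS : (l : ℕ) + 1 < n := by
                have : (l : ℕ) < (k : ℕ) + 1 := hlm
                omega
              rw [hrow i k l hk hlS (Ne.symm hlk) hMik, zero_mul, zero_mul]
            · rw [if_neg hlm, mul_zero]
          · intro h; exact absurd (Finset.mem_univ _) h
        rw [hLHS, hRHS] at hme
        have hakm : a k m ≠ 0 := hne k hk
        exact (mul_ne_zero (mul_ne_zero hMik hMik) hakm) hme.symm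
      · have : k = i := Fin.ext hki
        rwa [this] at hMik
      · exfalso
        have hMkk : M k k ≠ 0 := ih (n - 2 - (k : ℕ)) (by omega) k hk (le_refl _)
        rcases hcol k hk i k (by intro h; rw [h] at hki; omega) with h | h
        · exact hMik h
        · exact hMkk h
  have hdiagall : ∀ i : Fin n, (i : ℕ) + 1 < n → M i i ≠ 0 :=
    fun i hi => hdiag (n - 2 - (i : ℕ)) i hi (le_refl _)
  -- off-diagonal entries of non-last columns vanish
  have hoff : ∀ k : Fin n, (k : ℕ) + 1 < n → ∀ j : Fin n, j ≠ k → M j k = 0 := by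
    intro k hk j hjk
    exact (hcol k hk k j (Ne.symm hjk)).resolve_left (hdiagall k hk)
  -- the key relations
  have hrel : ∀ i j : Fin n, (i : ℕ) + 1 < n → (j : ℕ) + 1 < n → i < j → a i j ≠ 0 →
      M j j = M i i * M i i := by
    intro i j hi hj hij haij
    have hme := ME i j
    rw [Finset.sum_eq_single j] at hme
    rw [Finset.sum_eq_single i] at hme
    · rw [if_pos hij] at hme
      exact mul_left_cancel₀ haij (by rw [hme]; ring)
    · intro l _ hli
      by_cases hlS : (l : ℕ) + 1 < n
      · rw [hoff l hlS i (Ne.symm hli), zero_mul, zero_mul]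
      · have hlj : ¬ l < j := by
          rw [Fin.lt_def]
          have := j.isLt
          omega
        rw [if_neg hlj, mul_zero]
    · intro h; exact absurd (Finset.mem_univ _) h
    · intro l _ hlj
      by_cases hil : i < l
      · rw [hoff j hj l hlj, mul_zero]
      · rw [if_neg hil, zero_mul]
    · intro h; exact absurd (Finset.mem_univ _) h
  -- the diagonal is powers of α
  have hpow : ∀ m : ℕ, ∀ hm : m + 1 < n, M ⟨m, by omega⟩ ⟨m, by omega⟩ = α ^ (2 ^ m) := by
    intro m
    induction m with
    | zero => intro hm; rw [hα]; norm_num; exact hM _ _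
    | succ m ihm =>
      intro hm
      have hmn : m + 1 < n := by omega
      have hr := hrel ⟨m, by omega⟩ ⟨m + 1, by omega⟩ hmn hm
        (by show m < m + 1; omega) (hne ⟨m, by omega⟩ hmn)
      rw [ihm hmn] at hr
      rw [hr, ← pow_add, pow_succ]
      ring_nf
  have hα0 : α ≠ 0 := by
    rw [hα]
    exact hdiagall ⟨0, by omega⟩ (by show 0 + 1 < n; omega)
  have part1 : ∀ p : Fin n × Fin n, p ∈ IA →
      α ^ (2 ^ (p.2 : ℕ) - 2 ^ ((p.1 : ℕ) + 1)) = 1 := by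
    intro p hp
    rw [hIA, Finset.mem_filter] at hp
    obtain ⟨-, h1, h2, h3⟩ := hp
    have hi : (p.1 : ℕ) + 1 < n := by omega
    have hij : p.1 < p.2 := by rw [Fin.lt_def]; omega
    have hr := hrel p.1 p.2 hi h2 hij h3
    have e1 : M p.1 p.1 = α ^ (2 ^ (p.1 : ℕ)) := by
      have := hpow (p.1 : ℕ) hi
      simpa using this
    have e2 : M p.2 p.2 = α ^ (2 ^ (p.2 : ℕ)) := by
      have := hpow (p.2 : ℕ) h2
      simpa using this
    rw [e1, e2] at hr
    have hexp : α ^ (2 ^ (p.2 : ℕ)) = α ^ (2 ^ ((p.1 : ℕ) + 1)) := by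
      rw [hr, ← pow_add, pow_succ]
      ring_nf
    have hle : 2 ^ ((p.1 : ℕ) + 1) ≤ 2 ^ (p.2 : ℕ) :=
      Nat.pow_le_pow_right (by norm_num) (by omega)
    rw [pow_sub₀ α hα0 hle, hexp, mul_inv_cancel₀ (pow_ne_zero _ hα0)]
  refine ⟨part1, ?_⟩
  have hdvd : orderOf α ∣ IA.gcd (fun p : Fin n × Fin n => 2 ^ (p.2 : ℕ) - 2 ^ ((p.1 : ℕ) + 1)) :=
    Finset.dvd_gcd fun p hp => orderOf_dvd_of_pow_eq_one (part1 p hp)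
  exact orderOf_dvd_iff_pow_eq_one.mp hdvd
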